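/- Let 0 < p < 1, q ≥ 1 and ε > 0 be real numbers, and define g_ε(z) = |1 − z|^q + (1/2)(|z| + ε)^p for z ∈ ℝ. Then g_ε attains its infimum over ℝ at a unique point, and this point lies in the interval [0,1]. -/

import Mathlib

open Set Real Filter

noncomputable def gfun (p q e : ℝ) : ℝ → ℝ :=
  fun z => |1 - z| ^ q + (1 / 2) * (|z| + e) ^ p

lemma gcont (p q e : ℝ) (hp : 0 < p) (hq : 0 < q) : Continuous (gfun p q e) := by
  have h1 : Continuous (fun z : ℝ => |1 - z| ^ q) := by
    rw [continuous_iff_continuousAt]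
    intro x
    exact (Real.continuousAt_rpow_const _ q (Or.inr hq.le)).comp
      ((continuous_const.sub continuous_id).abs.continuousAt)
  have h2 : Continuous (fun z : ℝ => (|z| + e) ^ p) := by
    rw [continuous_iff_continuousAt]
    intro x
    exact (Real.continuousAt_rpow_const _ p (Or.inr hp.le)).comp
      ((continuous_abs.add continuous_const).continuousAt)
  exact h1.add (continuous_const.mul h2)

lemma gderiv (p q e : ℝ) (he : 0 < e) {z : ℝ} (hz : z ∈ Set.Ioo (0:ℝ) 1) :
    HasDerivAt (gfun p q e)
      ((-1) * q * (1 - z) ^ (q - 1) + (1 / 2) * (1 * p * (z + e) ^ (p - 1))) z := by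
  have hz1 : (0:ℝ) < 1 - z := sub_pos.mpr hz.2
  have hze : (0:ℝ) < z + e := by linarith [hz.1]
  have h1 : HasDerivAt (fun y : ℝ => 1 - y) (-1) z := by
    simpa using (hasDerivAt_id z).const_sub 1
  have h1' : HasDerivAt (fun y : ℝ => (1 - y) ^ q) ((-1) * q * (1 - z) ^ (q - 1)) z :=
    h1.rpow_const (Or.inl hz1.ne')
  have h2 : HasDerivAt (fun y : ℝ => y + e) 1 z := (hasDerivAt_id z).add_const e
  have h2' : HasDerivAt (fun y : ℝ => (y + e) ^ p) (1 * p * (z + e) ^ (p - 1)) z :=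
    h2.rpow_const (Or.inl hze.ne')
  have h : HasDerivAt (fun y : ℝ => (1 - y) ^ q + (1 / 2) * (y + e) ^ p)
      ((-1) * q * (1 - z) ^ (q - 1) + (1 / 2) * (1 * p * (z + e) ^ (p - 1))) z :=
    h1'.add (h2'.const_mul (1 / 2))
  refine h.congr_of_eventuallyEq ?_
  filter_upwards [Ioo_mem_nhds hz.1 hz.2] with y hy
  have : |1 - y| = 1 - y := abs_of_pos (sub_pos.mpr hy.2)
  have h2 : |y| = y := abs_of_pos hy.1
  simp [gfun, this, h2]

/-- The log-ratio function whose zeros are the critical points of `gfun`. -/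
noncomputable def Ffun (p q e : ℝ) (z : ℝ) : ℝ :=
  Real.log (p / 2) + (p - 1) * Real.log (z + e) - Real.log q - (q - 1) * Real.log (1 - z)

lemma deriv_gfun (p q e : ℝ) (he : 0 < e) {z : ℝ} (hz : z ∈ Set.Ioo (0:ℝ) 1) :
    deriv (gfun p q e) z
      = (-1) * q * (1 - z) ^ (q - 1) + (1 / 2) * (1 * p * (z + e) ^ (p - 1)) :=
  (gderiv p q e he hz).deriv

lemma crit_F (p q e : ℝ) (hp0 : 0 < p) (hq : 1 ≤ q) (he : 0 < e)
    {z : ℝ} (hz : z ∈ Set.Ioo (0:ℝ) 1) (hd : deriv (gfun p q e) z = 0) :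
    Ffun p q e z = 0 := by
  have hz1 : (0:ℝ) < 1 - z := sub_pos.mpr hz.2
  have hze : (0:ℝ) < z + e := by linarith [hz.1]
  rw [deriv_gfun p q e he hz] at hd
  have hAB : (p / 2) * (z + e) ^ (p - 1) = q * (1 - z) ^ (q - 1) := by linarith
  have hA : (0:ℝ) < (p / 2) * (z + e) ^ (p - 1) :=
    mul_pos (by linarith) (Real.rpow_pos_of_pos hze _)
  have hlog : Real.log ((p / 2) * (z + e) ^ (p - 1))
      = Real.log (q * (1 - z) ^ (q - 1)) := by rw [hAB]
  rw [Real.log_mul (by positivity) (Real.rpow_pos_of_pos hze _).ne',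
      Real.log_mul (by positivity) (Real.rpow_pos_of_pos hz1 _).ne',
      Real.log_rpow hze, Real.log_rpow hz1] at hlog
  unfold Ffun
  linarith

lemma Fpos_deriv_pos (p q e : ℝ) (hp0 : 0 < p) (hq : 1 ≤ q) (he : 0 < e)
    {z : ℝ} (hz : z ∈ Set.Ioo (0:ℝ) 1) (hF : 0 < Ffun p q e z) :
    0 < deriv (gfun p q e) z := by
  have hz1 : (0:ℝ) < 1 - z := sub_pos.mpr hz.2
  have hze : (0:ℝ) < z + e := by linarith [hz.1]
  have hA : (0:ℝ) < (p / 2) * (z + e) ^ (p - 1) :=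
    mul_pos (by linarith) (Real.rpow_pos_of_pos hze _)
  have hB : (0:ℝ) < q * (1 - z) ^ (q - 1) :=
    mul_pos (by linarith) (Real.rpow_pos_of_pos hz1 _)
  have hlogs : Real.log (q * (1 - z) ^ (q - 1))
      < Real.log ((p / 2) * (z + e) ^ (p - 1)) := by
    rw [Real.log_mul (by positivity) (Real.rpow_pos_of_pos hze _).ne',
        Real.log_mul (by positivity) (Real.rpow_pos_of_pos hz1 _).ne',
        Real.log_rpow hze, Real.log_rpow hz1]
    have := hF; unfold Ffun at this; linarith
  have hBA : q * (1 - z) ^ (q - 1) < (p / 2) * (z + e) ^ (p - 1) :=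
    (Real.log_lt_log_iff hB hA).mp hlogs
  rw [deriv_gfun p q e he hz]
  linarith

/-- Strict convexity of `Ffun` in the relevant pointwise form: if `Ffun` vanishes at
`a < c` then it is positive to the right of `c` (inside `(0,1)`). -/
lemma F_pos_right (p q e : ℝ) (hp1 : p < 1) (hq : 1 ≤ q) (he : 0 < e)
    {a c z : ℝ} (ha : 0 < a) (hac : a < c) (hcz : c < z) (hz1 : z < 1)
    (hFa : Ffun p q e a = 0) (hFc : Ffun p q e c = 0) : 0 < Ffun p q e z := by
  have hza : (0:ℝ) < z - a := by linarith
  obtain ⟨t, s, htpos, hspos, hts, hcomb⟩ :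
      ∃ t s : ℝ, 0 < t ∧ 0 < s ∧ t + s = 1 ∧ c = t * a + s * z :=
    ⟨(z - c) / (z - a), (c - a) / (z - a), div_pos (by linarith) hza,
      div_pos (by linarith) hza, by field_simp; ring, by field_simp; ring⟩
  -- strict concavity of log applied to a+e, z+e
  have hlog1 : t * Real.log (a + e) + s * Real.log (z + e) < Real.log (c + e) := by
    have h := strictConcaveOn_log_Ioi.2 (mem_Ioi.mpr (by linarith : (0:ℝ) < a + e))
      (mem_Ioi.mpr (by linarith : (0:ℝ) < z + e))
      (by intro hcon; exact absurd hcon (by intro h; linarith))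
      htpos hspos hts
    have heq : t * (a + e) + s * (z + e) = c + e := by
      rw [hcomb]; linear_combination e * hts
    simpa only [smul_eq_mul, heq] using h
  -- strict concavity of log applied to 1-a, 1-z
  have hlog2 : t * Real.log (1 - a) + s * Real.log (1 - z) < Real.log (1 - c) := by
    have h := strictConcaveOn_log_Ioi.2 (mem_Ioi.mpr (by linarith : (0:ℝ) < 1 - a))
      (mem_Ioi.mpr (by linarith : (0:ℝ) < 1 - z))
      (by intro hcon; exact absurd hcon (by intro h; linarith))
      htpos hspos hts
    have heq : t * (1 - a) + s * (1 - z) = 1 - c := by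
      rw [hcomb]; linear_combination hts
    simpa only [smul_eq_mul, heq] using h
  have expand : t * Ffun p q e a + s * Ffun p q e z
      = Real.log (p / 2) + (p - 1) * (t * Real.log (a + e) + s * Real.log (z + e))
        - Real.log q - (q - 1) * (t * Real.log (1 - a) + s * Real.log (1 - z)) := by
    unfold Ffun
    linear_combination (Real.log (p / 2) - Real.log q) * hts
  have key : Ffun p q e c < t * Ffun p q e a + s * Ffun p q e z := by
    rw [expand]
    have h1 : (p - 1) * Real.log (c + e)
        < (p - 1) * (t * Real.log (a + e) + s * Real.log (z + e)) :=
      mul_lt_mul_of_neg_left hlog1 (by linarith : p - 1 < 0)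
    have h2 : (q - 1) * (t * Real.log (1 - a) + s * Real.log (1 - z))
        ≤ (q - 1) * Real.log (1 - c) :=
      mul_le_mul_of_nonneg_left hlog2.le (by linarith)
    unfold Ffun
    linarith
  rw [hFa, hFc] at key
  rw [mul_zero, zero_add] at key
  by_contra hcon
  push_neg at hcon
  have : s * Ffun p q e z ≤ 0 := mul_nonpos_of_nonneg_of_nonpos hspos.le hcon
  linarith

/-- Core uniqueness lemma: there are no two distinct global minimizers in `(0,1]`. -/
lemma no_two_min (p q e : ℝ) (hp0 : 0 < p) (hp1 : p < 1) (hq : 1 ≤ q) (he : 0 < e)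
    {a b : ℝ} (ha : 0 < a) (hb : b ≤ 1) (hab : a < b)
    (hmin : ∀ y, gfun p q e a ≤ gfun p q e y)
    (heq : gfun p q e b = gfun p q e a) : False := by
  have hq0 : (0:ℝ) < q := by linarith
  have hcont := gcont p q e hp0 hq0
  have haI : a ∈ Set.Ioo (0:ℝ) 1 := ⟨ha, lt_of_lt_of_le hab hb⟩
  -- F a = 0
  have hFa : Ffun p q e a = 0 := by
    refine crit_F p q e hp0 hq he haI ?_
    have : IsLocalMin (gfun p q e) a := Filter.Eventually.of_forall hmin
    exact this.deriv_eq_zero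
  -- find c ∈ (a,b) with F c = 0
  obtain ⟨c, hcab, hFc⟩ : ∃ c, c ∈ Set.Ioo a b ∧ Ffun p q e c = 0 := by
    by_cases hmid : gfun p q e ((a + b) / 2) = gfun p q e a
    · refine ⟨(a + b) / 2, ⟨by linarith, by linarith⟩, ?_⟩
      refine crit_F p q e hp0 hq he ⟨by linarith, by linarith⟩ ?_
      have hloc : IsLocalMin (gfun p q e) ((a + b) / 2) :=
        Filter.Eventually.of_forall (fun y => by rw [hmid]; exact hmin y)
      exact hloc.deriv_eq_zero
    · obtain ⟨c, hcmem, hcmax⟩ :=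
        isCompact_Icc.exists_isMaxOn (Set.nonempty_Icc.mpr hab.le)
          hcont.continuousOn
      have hmidmem : (a + b) / 2 ∈ Set.Icc a b := ⟨by linarith, by linarith⟩
      have hgc : gfun p q e a < gfun p q e c :=
        lt_of_lt_of_le (lt_of_le_of_ne (hmin _) (Ne.symm hmid)) (hcmax hmidmem)
      have hca : c ≠ a := by intro h; rw [h] at hgc; exact lt_irrefl _ hgc
      have hcb : c ≠ b := by intro h; rw [h, heq] at hgc; exact lt_irrefl _ hgc
      have hcI : c ∈ Set.Ioo a b :=
        ⟨lt_of_le_of_ne hcmem.1 (Ne.symm hca), lt_of_le_of_ne hcmem.2 hcb⟩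
      refine ⟨c, hcI, ?_⟩
      refine crit_F p q e hp0 hq he ⟨by linarith [hcI.1], by linarith [hcI.2]⟩ ?_
      have hloc : IsLocalMax (gfun p q e) c :=
        hcmax.isLocalMax (Icc_mem_nhds hcI.1 hcI.2)
      exact hloc.deriv_eq_zero
  -- g is strictly increasing on [c,1]
  have hmono : StrictMonoOn (gfun p q e) (Set.Icc c 1) := by
    refine strictMonoOn_of_deriv_pos (convex_Icc c 1) hcont.continuousOn ?_
    intro z hz
    rw [interior_Icc] at hz
    have hzI : z ∈ Set.Ioo (0:ℝ) 1 := ⟨by linarith [hcab.1, hz.1], hz.2⟩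
    exact Fpos_deriv_pos p q e hp0 hq he hzI
      (F_pos_right p q e hp1 hq he ha hcab.1 hz.1 hz.2 hFa hFc)
  have hcb1 : c ∈ Set.Icc c 1 := ⟨le_refl c, by linarith [hcab.2]⟩
  have hbb1 : b ∈ Set.Icc c 1 := ⟨hcab.2.le, hb⟩
  have := hmono hcb1 hbb1 hcab.2
  rw [heq] at this
  exact absurd (hmin c) (not_le.mpr this)

lemma g_one_lt_g_zero (p q e : ℝ) (hp0 : 0 < p) (hp1 : p < 1) (hq : 1 ≤ q)
    (he : 0 < e) : gfun p q e 1 < gfun p q e 0 := by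
  have hq0 : q ≠ 0 := by linarith
  have hsub : (1 + e) ^ p ≤ 1 + e ^ p := by
    have h := NNReal.rpow_add_le_add_rpow (p := p) 1 e.toNNReal hp0.le hp1.le
    have h2 := (NNReal.coe_le_coe).mpr h
    push_cast [Real.coe_toNNReal e he.le] at h2
    simpa using h2
  have h1 : gfun p q e 1 = (1 / 2) * (1 + e) ^ p := by
    simp [gfun, Real.zero_rpow hq0]
  have h0 : gfun p q e 0 = 1 + (1 / 2) * e ^ p := by
    simp [gfun, Real.one_rpow]
  rw [h1, h0]
  nlinarith

theorem stmt_11 (p q eps : ℝ) (hp0 : 0 < p) (hp1 : p < 1) (hq : 1 ≤ q)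
    (heps : 0 < eps) :
    ∃ z : ℝ, z ∈ Set.Icc (0 : ℝ) 1 ∧
      (∀ y : ℝ,
        |1 - z| ^ q + (1 / 2) * (|z| + eps) ^ p ≤
          |1 - y| ^ q + (1 / 2) * (|y| + eps) ^ p) ∧
      ∀ w : ℝ,
        (∀ y : ℝ,
          |1 - w| ^ q + (1 / 2) * (|w| + eps) ^ p ≤
            |1 - y| ^ q + (1 / 2) * (|y| + eps) ^ p) →
        w = z := by
  have hq0 : (0:ℝ) < q := by linarith
  have hcont := gcont p q eps hp0 hq0
  obtain ⟨z, hzmem, hzmin⟩ :=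
    isCompact_Icc.exists_isMinOn (Set.nonempty_Icc.mpr (by norm_num : (0:ℝ) ≤ 1))
      hcont.continuousOn
  -- z is a global minimizer
  have hglob : ∀ y, gfun p q eps z ≤ gfun p q eps y := by
    intro y
    rcases le_or_gt y 1 with hy1 | hy1
    · rcases le_or_gt 0 y with hy0 | hy0
      · exact hzmin ⟨hy0, hy1⟩
      · -- y < 0 : compare with g 0
        refine le_trans (hzmin ⟨le_refl 0, by norm_num⟩) ?_
        have h1 : |1 - (0:ℝ)| ^ q ≤ |1 - y| ^ q := by
          have e0 : |1 - (0:ℝ)| = 1 := by norm_num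
          have e1 : |1 - y| = 1 - y := abs_of_pos (by linarith)
          rw [e0, e1]
          exact Real.rpow_le_rpow (by norm_num) (by linarith) hq0.le
        have h2 : (|(0:ℝ)| + eps) ^ p ≤ (|y| + eps) ^ p := by
          refine Real.rpow_le_rpow (by simp [heps.le]) ?_ hp0.le
          have := abs_nonneg y
          simp only [abs_zero]
          linarith
        show gfun p q eps 0 ≤ gfun p q eps y
        exact add_le_add h1 (mul_le_mul_of_nonneg_left h2 (by norm_num))
    · -- 1 < y : compare with g 1
      refine le_trans (hzmin ⟨by norm_num, le_refl 1⟩) ?_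
      have h1 : |1 - (1:ℝ)| ^ q ≤ |1 - y| ^ q := by
        have e0 : |1 - (1:ℝ)| = 0 := by norm_num
        rw [e0, Real.zero_rpow (by linarith : q ≠ 0)]
        exact Real.rpow_nonneg (abs_nonneg _) q
      have h2 : (|(1:ℝ)| + eps) ^ p ≤ (|y| + eps) ^ p := by
        refine Real.rpow_le_rpow (by simp; linarith) ?_ hp0.le
        rw [abs_of_pos (by linarith : (0:ℝ) < y)]
        simp only [abs_one]
        linarith
      show gfun p q eps 1 ≤ gfun p q eps y
      exact add_le_add h1 (mul_le_mul_of_nonneg_left h2 (by norm_num))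
  -- any global minimizer lies in (0,1]
  have hloc : ∀ w : ℝ, (∀ y, gfun p q eps w ≤ gfun p q eps y) → 0 < w ∧ w ≤ 1 := by
    intro w hw
    have h10 := g_one_lt_g_zero p q eps hp0 hp1 hq heps
    constructor
    · rcases lt_trichotomy w 0 with hw0 | hw0 | hw0
      · -- w < 0 impossible : g 0 < g w
        exfalso
        have h1 : |1 - (0:ℝ)| ^ q < |1 - w| ^ q := by
          have e0 : |1 - (0:ℝ)| = 1 := by norm_num
          have e1 : |1 - w| = 1 - w := abs_of_pos (by linarith)
          rw [e0, e1, Real.one_rpow]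
          calc (1:ℝ) = 1 ^ q := (Real.one_rpow q).symm
            _ < (1 - w) ^ q := Real.rpow_lt_rpow (by norm_num) (by linarith) hq0
        have h2 : (|(0:ℝ)| + eps) ^ p ≤ (|w| + eps) ^ p := by
          refine Real.rpow_le_rpow (by simp [heps.le]) ?_ hp0.le
          have := abs_nonneg w
          simp only [abs_zero]; linarith
        have : gfun p q eps 0 < gfun p q eps w :=
          add_lt_add_of_lt_of_le h1 (mul_le_mul_of_nonneg_left h2 (by norm_num))
        exact absurd (hw 0) (not_le.mpr this)
      · -- w = 0 impossible : g 1 < g 0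
        exfalso
        rw [hw0] at hw
        exact absurd (hw 1) (not_le.mpr h10)
      · exact hw0
    · by_contra hw1
      push_neg at hw1
      -- w > 1 impossible : g 1 < g w
      have h1 : |1 - (1:ℝ)| ^ q < |1 - w| ^ q := by
        have e0 : |1 - (1:ℝ)| = 0 := by norm_num
        have e1 : |1 - w| = w - 1 := by rw [abs_sub_comm]; exact abs_of_pos (by linarith)
        rw [e0, e1, Real.zero_rpow (by linarith : q ≠ 0)]
        exact Real.rpow_pos_of_pos (by linarith) q
      have h2 : (|(1:ℝ)| + eps) ^ p ≤ (|w| + eps) ^ p := by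
        refine Real.rpow_le_rpow (by simp; linarith) ?_ hp0.le
        rw [abs_of_pos (by linarith : (0:ℝ) < w)]
        simp only [abs_one]; linarith
      have : gfun p q eps 1 < gfun p q eps w :=
        add_lt_add_of_lt_of_le h1 (mul_le_mul_of_nonneg_left h2 (by norm_num))
      exact absurd (hw 1) (not_le.mpr this)
  obtain ⟨hz0, hz1⟩ := hloc z hglob
  refine ⟨z, hzmem, hglob, ?_⟩
  intro w hw
  obtain ⟨hw0, hw1⟩ := hloc w hw
  by_contra hne
  have heqwz : gfun p q eps w = gfun p q eps z := le_antisymm (hw z) (hglob w)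
  rcases lt_or_gt_of_ne hne with h | h
  · exact no_two_min p q eps hp0 hp1 hq heps hw0 hz1 h hw heqwz.symm
  · exact no_two_min p q eps hp0 hp1 hq heps hz0 hw1 h hglob heqwz
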